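/- Let F : ℝ → ℝ be the cumulative distribution function of a random variable taking values in [0,1]; that is, F is monotone nondecreasing, right-continuous, F(x) = 0 for all x < 0, and F(x) = 1 for all x ≥ 1. For β ∈ (0,1], define the value-at-risk VaR_β(F) = inf{ x ∈ ℝ : F(x) ≥ β }. Then for every α ∈ (0,1], (1/α)·∫_0^α VaR_β(F) dβ = (1/α)·( α − ∫_0^1 min{F(x), α} dx ). -/

import Mathlib

open MeasureTheory Set

/-- **Lemma (equivalent definitions of CVaR).**
For the CDF `F` of a `[0,1]`-valued random variable and `α ∈ (0,1]`,
`(1/α) ∫_0^α VaR_β(F) dβ = (1/α)(α − ∫_0^1 min{F(x), α} dx)`,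
where `VaR_β(F) = inf {x : F(x) ≥ β}`. -/
theorem cvar_integral_eq (F : ℝ → ℝ) (hmono : Monotone F)
    (hrc : ∀ x : ℝ, ContinuousWithinAt F (Set.Ici x) x)
    (h0 : ∀ x : ℝ, x < 0 → F x = 0) (h1 : ∀ x : ℝ, 1 ≤ x → F x = 1)
    (α : ℝ) (hα0 : 0 < α) (hα1 : α ≤ 1) :
    (1 / α) * ∫ β in (0:ℝ)..α, sInf {x : ℝ | β ≤ F x} =
      (1 / α) * (α - ∫ x in (0:ℝ)..1, min (F x) α) := by
  have hF0 : ∀ x : ℝ, 0 ≤ F x := by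
    intro x
    rcases lt_or_ge x 0 with h | h
    · exact (h0 x h).ge
    · calc (0:ℝ) = F (-1) := (h0 (-1) (by norm_num)).symm
        _ ≤ F x := hmono (by linarith)
  set g : ℝ → ℝ := fun β => sInf {x : ℝ | β ≤ F x} with hg
  have hmem1 : ∀ β : ℝ, β ≤ 1 → (1:ℝ) ∈ {x : ℝ | β ≤ F x} := by
    intro β hβ
    simp only [Set.mem_setOf_eq, h1 1 le_rfl]
    exact hβ
  have hbdd : ∀ β : ℝ, 0 < β → BddBelow {x : ℝ | β ≤ F x} := by
    intro β hβ
    refine ⟨0, fun x hx => ?_⟩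
    by_contra h
    push_neg at h
    rw [Set.mem_setOf_eq, h0 x h] at hx
    linarith
  have hg0 : ∀ β : ℝ, 0 < β → β ≤ 1 → 0 ≤ g β := by
    intro β hβ0 hβ1
    refine le_csInf ⟨1, hmem1 β hβ1⟩ (fun x hx => ?_)
    by_contra h
    push_neg at h
    rw [Set.mem_setOf_eq, h0 x h] at hx
    linarith
  have hg1 : ∀ β : ℝ, 0 < β → β ≤ 1 → g β ≤ 1 := by
    intro β hβ0 hβ1
    exact csInf_le (hbdd β hβ0) (hmem1 β hβ1)
  -- right-continuity: the infimum is attained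
  have hFg : ∀ β : ℝ, 0 < β → β ≤ 1 → β ≤ F (g β) := by
    intro β hβ0 hβ1
    by_contra h
    push_neg at h
    have h2 : ∀ᶠ x in nhdsWithin (g β) (Set.Ici (g β)), F x < β :=
      (hrc (g β)).eventually_lt_const h
    obtain ⟨u, hu, hsub⟩ := mem_nhdsGE_iff_exists_Ico_subset.mp h2
    obtain ⟨x, hxS, hxu⟩ :=
      (csInf_lt_iff (hbdd β hβ0) ⟨1, hmem1 β hβ1⟩).mp hu
    have hgx : g β ≤ x := csInf_le (hbdd β hβ0) hxS
    have : F x < β := hsub ⟨hgx, hxu⟩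
    exact absurd hxS (by simp only [Set.mem_setOf_eq]; linarith)
  have key : ∀ β t : ℝ, 0 < β → β ≤ 1 → (t < g β ↔ F t < β) := by
    intro β t hβ0 hβ1
    constructor
    · intro h
      by_contra h'
      push_neg at h'
      exact absurd (csInf_le (hbdd β hβ0) h') (not_le.mpr h)
    · intro h
      by_contra h'
      push_neg at h'
      have : β ≤ F t := le_trans (hFg β hβ0 hβ1) (hmono h')
      linarith
  have gmono : MonotoneOn g (Set.Ioc (0:ℝ) α) := by
    intro β1 hβ1 β2 hβ2 h12
    exact csInf_le_csInf (hbdd β1 hβ1.1) ⟨1, hmem1 β2 (hβ2.2.trans hα1)⟩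
      (fun x hx => le_trans h12 hx)
  set μ := (volume : Measure ℝ).restrict (Set.Ioc (0:ℝ) α) with hμ
  have gmeas : AEMeasurable g μ :=
    aemeasurable_restrict_of_monotoneOn measurableSet_Ioc gmono
  have gint : Integrable g μ := by
    refine Integrable.mono' (g := fun _ => (1:ℝ)) ?_ gmeas.aestronglyMeasurable ?_
    · exact (integrableOn_const_iff).mpr (Or.inr measure_Ioc_lt_top)
    · refine (ae_restrict_iff' measurableSet_Ioc).mpr (ae_of_all _ fun β hβ => ?_)
      rw [Real.norm_eq_abs, abs_le]
      constructor
      · show -(1:ℝ) ≤ g β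
        linarith [hg0 β hβ.1 (hβ.2.trans hα1)]
      · show g β ≤ (1:ℝ)
        exact hg1 β hβ.1 (hβ.2.trans hα1)
  have g_nn : 0 ≤ᵐ[μ] g :=
    (ae_restrict_iff' measurableSet_Ioc).mpr
      (ae_of_all _ fun β hβ => hg0 β hβ.1 (hβ.2.trans hα1))
  have main := gint.integral_eq_integral_meas_lt g_nn
  simp only [measureReal_def] at main
  -- compute the measure slices
  have slice : ∀ t : ℝ, 0 < t → (μ {a : ℝ | t < g a}).toReal = α - min (F t) α := by
    intro t ht
    have hset : {a : ℝ | t < g a} ∩ Set.Ioc 0 α = Set.Ioc (F t) α := by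
      ext β
      simp only [Set.mem_inter_iff, Set.mem_setOf_eq, Set.mem_Ioc]
      constructor
      · rintro ⟨h, hβ0, hβα⟩
        exact ⟨(key β t hβ0 (hβα.trans hα1)).mp h, hβα⟩
      · rintro ⟨h, hβα⟩
        have hβ0 : 0 < β := lt_of_le_of_lt (hF0 t) h
        exact ⟨(key β t hβ0 (hβα.trans hα1)).mpr h, hβ0, hβα⟩
    rw [hμ, Measure.restrict_apply' measurableSet_Ioc, hset, Real.volume_Ioc]
    rcases le_total (F t) α with h | h
    · rw [min_eq_left h, ENNReal.toReal_ofReal (by linarith)]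
    · rw [min_eq_right h, ENNReal.ofReal_eq_zero.mpr (by linarith)]
      simp
  -- rewrite the right side of `main`
  have step1 : ∫ t in Set.Ioi (0:ℝ), (μ {a : ℝ | t < g a}).toReal
      = ∫ t in Set.Ioi (0:ℝ), (Set.Ioc (0:ℝ) 1).indicator
          (fun t => α - min (F t) α) t := by
    refine setIntegral_congr_fun measurableSet_Ioi (fun t ht => ?_)
    rw [slice t ht]
    rcases le_or_gt t 1 with h | h
    · rw [Set.indicator_of_mem (Set.mem_Ioc.mpr ⟨ht, h⟩)]
    · rw [Set.indicator_of_notMem (fun hc => absurd hc.2 (not_le.mpr h))]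
      rw [h1 t h.le, min_eq_right hα1]
      ring
  have step2 : ∫ t in Set.Ioi (0:ℝ), (Set.Ioc (0:ℝ) 1).indicator
      (fun t => α - min (F t) α) t = ∫ t in Set.Ioc (0:ℝ) 1, (α - min (F t) α) := by
    rw [setIntegral_indicator measurableSet_Ioc]
    congr 1
    rw [Set.inter_eq_right.mpr (fun x hx => hx.1)]
  have hint : IntervalIntegrable (fun t => min (F t) α) volume 0 1 := by
    apply MonotoneOn.intervalIntegrable
    exact fun x _ y _ hxy => min_le_min (hmono hxy) le_rfl
  have step3 : ∫ t in Set.Ioc (0:ℝ) 1, (α - min (F t) α)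
      = α - ∫ x in (0:ℝ)..1, min (F x) α := by
    rw [← intervalIntegral.integral_of_le (by norm_num : (0:ℝ) ≤ 1),
      intervalIntegral.integral_sub intervalIntegrable_const hint,
      intervalIntegral.integral_const]
    simp
  have lhs_eq : ∫ β in (0:ℝ)..α, g β = ∫ β, g β ∂μ := by
    rw [intervalIntegral.integral_of_le hα0.le]
  rw [show (∫ β in (0:ℝ)..α, sInf {x : ℝ | β ≤ F x}) = ∫ β in (0:ℝ)..α, g β from rfl,
    lhs_eq, main, step1, step2, step3]
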